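/- Let R = F[x_1^{±1}, ..., x_n^{±1}] be a Laurent polynomial ring over a field F. Suppose λ ∈ R is a Laurent polynomial with the property that for every k ∈ {1, ..., n−1}, the image of λ under the F-algebra map r_k : R → F[d_1^{±1},...,d_{n}^{±1}, a][ (d_k d_{k+1})^{-1} ]-type evaluation given by x_i ↦ d_1⋯d_i for i < k, x_k ↦ d_1⋯d_{k-1}·a, and x_i ↦ −d_1⋯d_i for i > k, lies in the subring F[d_1^{±1},...,d_{k-1}^{±1}, a, (d_k d_{k+1})^{±1}, d_{k+2}^{±1},...,d_n^{±1}] (i.e. involves no negative powers of a). Then λ ∈ F[x_1, ..., x_{n-1}, x_n^{±1}]. -/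

import Mathlib

open Finset

/-- Splitting a tail-sum at its first index. -/
private lemma sum_tail_split {n : ℕ} (e : Fin n → ℤ) (j : Fin n) :
    ∑ i ∈ univ.filter (fun i : Fin n => j ≤ i), e i
      = e j + ∑ i ∈ univ.filter (fun i : Fin n => j < i), e i := by
  have h : univ.filter (fun i : Fin n => j ≤ i)
      = insert j (univ.filter (fun i : Fin n => j < i)) := by
    ext i
    simp only [mem_filter, mem_univ, true_and, mem_insert]
    constructor
    · intro h
      rcases eq_or_lt_of_le h with h' | h'
      · exact Or.inl h'.symm
      · exact Or.inr h'
    · rintro (rfl | h)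
      · exact le_refl _
      · exact le_of_lt h
  rw [h, Finset.sum_insert (by simp)]

/-- The combinatorial core of the 'optimal upper bound'.  Let
`R = F[x₁^{±1},…,x_n^{±1}]` (monoid algebra of `ℤⁿ`).  For each `k < n` (zero-based
`K` with `K < n−1`) let `r_K : R → F[d₁^{±1},…,d_n^{±1}, a^{±1}]` be the map sending
the monomial `x^e` to `(−1)^{Σ_{i>K} e_i} d^{E_K(e)} a^{e_K}`, corresponding to
`x_i ↦ d₁⋯d_i` for `i < K`, `x_K ↦ d₁⋯d_{K-1}·a`, `x_i ↦ −d₁⋯d_i` for `i > K`.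
If for every such `K` the image `r_K λ` has no negative powers of `a`, then
`λ ∈ F[x₁,…,x_{n-1},x_n^{±1}]`. -/
theorem optimal_upper_bound_combinatorics (F : Type*) [Field F] (n : ℕ)
    (hn : 0 < n)
    (E : Fin n → (Fin n → ℤ) → (Fin n → ℤ))
    (hE : ∀ (K : Fin n) (e : Fin n → ℤ), E K e = fun j =>
      (∑ i ∈ Finset.univ.filter (fun i : Fin n => j ≤ i ∧ i ≠ K), e i)
        + (if (j : ℕ) < (K : ℕ) then e K else 0))
    (rk : Fin n → AddMonoidAlgebra F (Fin n → ℤ)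
            → AddMonoidAlgebra F ((Fin n → ℤ) × ℤ))
    (hrk : ∀ (K : Fin n) (μ : AddMonoidAlgebra F (Fin n → ℤ)),
      rk K μ = μ.coeff.sum (fun e c =>
        AddMonoidAlgebra.single (E K e, e K)
          (((-1 : F) ^ (∑ i ∈ Finset.univ.filter (fun i : Fin n => K < i), e i)) * c)))
    (lam : AddMonoidAlgebra F (Fin n → ℤ))
    (hlam : ∀ K : Fin n, (K : ℕ) < n - 1 →
      ∀ p : (Fin n → ℤ) × ℤ, p.2 < 0 → (rk K lam).coeff p = 0) :
    lam ∈ Algebra.adjoin F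
      (((Set.range fun i : Fin n =>
          (AddMonoidAlgebra.single (Pi.single i 1 : Fin n → ℤ) (1 : F) :
            AddMonoidAlgebra F (Fin n → ℤ))) ∪
        {AddMonoidAlgebra.single (-(Pi.single (⟨n - 1, by omega⟩ : Fin n) 1) : Fin n → ℤ) (1 : F)} :
          Set (AddMonoidAlgebra F (Fin n → ℤ)))) := by
  classical
  -- Step 1: injectivity of `e ↦ (E K e, e K)`.
  have hinj : ∀ (K : Fin n) (e e' : Fin n → ℤ),
      E K e = E K e' → e K = e' K → e = e' := by
    intro K e e' hEe hK
    -- tail sums agree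
    have hS : ∀ j : Fin n, ∑ i ∈ univ.filter (fun i : Fin n => j ≤ i), e i
        = ∑ i ∈ univ.filter (fun i : Fin n => j ≤ i), e' i := by
      intro j
      have split : ∀ f : Fin n → ℤ,
          ∑ i ∈ univ.filter (fun i : Fin n => j ≤ i), f i
            = (∑ i ∈ univ.filter (fun i : Fin n => j ≤ i ∧ i ≠ K), f i)
              + (if j ≤ K then f K else 0) := by
        intro f
        rw [← Finset.sum_filter_add_sum_filter_not
          (univ.filter (fun i : Fin n => j ≤ i)) (fun i => i ≠ K)]
        congr 1
        · rw [Finset.filter_filter]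
        · rw [Finset.filter_filter]
          simp only [not_not]
          rw [Finset.sum_filter]
          have hterm : ∀ i : Fin n, (if j ≤ i ∧ i = K then f i else 0)
              = (if i = K then (if j ≤ K then f K else 0) else 0) := by
            intro i
            by_cases h : i = K
            · subst h; by_cases h' : j ≤ i <;> simp [h']
            · simp [h]
          rw [Finset.sum_congr rfl (fun i _ => hterm i),
            Finset.sum_ite_eq' univ K (fun _ => if j ≤ K then f K else 0),
            if_pos (mem_univ K)]
      have hj : (∑ i ∈ univ.filter (fun i : Fin n => j ≤ i ∧ i ≠ K), e i)
          = (∑ i ∈ univ.filter (fun i : Fin n => j ≤ i ∧ i ≠ K), e' i) := by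
        have h := congrFun hEe j
        rw [hE K e, hE K e'] at h
        simp only [hK] at h
        exact add_right_cancel h
      rw [split e, split e', hj, hK]
    -- recover `e` from tail sums, by downward induction
    have main : ∀ m : ℕ, ∀ j : Fin n, n - (j : ℕ) ≤ m → e j = e' j := by
      intro m
      induction m with
      | zero => intro j hj; exact absurd hj (by have := j.isLt; omega)
      | succ m ih =>
        intro j hj
        have hSj := hS j
        rw [sum_tail_split e j, sum_tail_split e' j] at hSj
        have htail : ∑ i ∈ univ.filter (fun i : Fin n => j < i), e i
            = ∑ i ∈ univ.filter (fun i : Fin n => j < i), e' i := by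
          refine Finset.sum_congr rfl (fun i hi => ?_)
          simp only [mem_filter, mem_univ, true_and] at hi
          have hlt : (j : ℕ) < (i : ℕ) := hi
          exact ih i (by have := i.isLt; omega)
        rw [htail] at hSj
        exact add_right_cancel hSj
    exact funext fun j => main n j (by have := j.isLt; omega)
  -- Step 2: coefficients with a negative `K`-th exponent (`K < n-1`) vanish.
  have hvanish : ∀ (K : Fin n), (K : ℕ) < n - 1 → ∀ e : Fin n → ℤ, e K < 0 →
      lam.coeff e = 0 := by
    intro K hKn e he
    by_cases hsupp : e ∈ lam.coeff.support
    · have h0 := hlam K hKn (E K e, e K) he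
      rw [hrk] at h0
      rw [AddMonoidAlgebra.coeff_finsuppSum, Finsupp.sum_apply] at h0
      simp only [AddMonoidAlgebra.coeff_single, Finsupp.single_apply] at h0
      rw [Finsupp.sum, Finset.sum_eq_single_of_mem e hsupp ?side] at h0
      · rw [if_pos rfl] at h0
        have hpow : ((-1 : F) ^ (∑ i ∈ univ.filter (fun i : Fin n => K < i), e i)) ≠ 0 :=
          zpow_ne_zero _ (neg_ne_zero.mpr one_ne_zero)
        exact (mul_eq_zero.mp h0).resolve_left hpow
      · intro e' _ hne
        rw [if_neg]
        intro hcontra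
        have h1 : E K e' = E K e := congrArg Prod.fst hcontra
        have h2 : e' K = e K := congrArg Prod.snd hcontra
        exact hne (hinj K e' e h1 h2)
    · exact Finsupp.notMem_support_iff.mp hsupp
  -- Step 3: membership in the adjoin.
  set S : Set (AddMonoidAlgebra F (Fin n → ℤ)) :=
    ((Set.range fun i : Fin n =>
        (AddMonoidAlgebra.single (Pi.single i 1 : Fin n → ℤ) (1 : F) :
          AddMonoidAlgebra F (Fin n → ℤ))) ∪
      {AddMonoidAlgebra.single (-(Pi.single (⟨n - 1, by omega⟩ : Fin n) 1) : Fin n → ℤ) (1 : F)})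
    with hSdef
  have hgen1 : ∀ i : Fin n,
      AddMonoidAlgebra.single (Pi.single i 1 : Fin n → ℤ) (1 : F) ∈ Algebra.adjoin F S :=
    fun i => Algebra.subset_adjoin (Set.mem_union_left _ (Set.mem_range_self i))
  have hgen2 :
      AddMonoidAlgebra.single (-(Pi.single (⟨n - 1, by omega⟩ : Fin n) 1) : Fin n → ℤ) (1 : F)
        ∈ Algebra.adjoin F S :=
    Algebra.subset_adjoin (Set.mem_union_right _ rfl)
  have hmono : ∀ (i : Fin n) (m : ℤ), ((i : ℕ) < n - 1 → 0 ≤ m) →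
      AddMonoidAlgebra.single (m • Pi.single i 1 : Fin n → ℤ) (1 : F)
        ∈ Algebra.adjoin F S := by
    intro i m him
    by_cases hm : 0 ≤ m
    · have hv : (m • Pi.single i 1 : Fin n → ℤ) = m.toNat • (Pi.single i 1 : Fin n → ℤ) := by
        rw [← natCast_zsmul, Int.toNat_of_nonneg hm]
      have hp : AddMonoidAlgebra.single (Pi.single i 1 : Fin n → ℤ) (1 : F) ^ m.toNat
          = AddMonoidAlgebra.single (m.toNat • Pi.single i 1 : Fin n → ℤ) (1 : F) := by
        rw [AddMonoidAlgebra.single_pow, one_pow]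
      rw [hv, ← hp]
      exact pow_mem (hgen1 i) _
    · have hi : i = (⟨n - 1, by omega⟩ : Fin n) := by
        have h1 := i.isLt
        have h2 : ¬ ((i : ℕ) < n - 1) := fun h => hm (him h)
        exact Fin.ext (by simp; omega)
      have hv : (m • Pi.single i 1 : Fin n → ℤ)
          = (-m).toNat • (-(Pi.single i 1) : Fin n → ℤ) := by
        rw [← natCast_zsmul, Int.toNat_of_nonneg (by omega), smul_neg, ← neg_smul, neg_neg]
      have hp : AddMonoidAlgebra.single (-(Pi.single i 1) : Fin n → ℤ) (1 : F) ^ (-m).toNat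
          = AddMonoidAlgebra.single ((-m).toNat • -(Pi.single i 1) : Fin n → ℤ) (1 : F) := by
        rw [AddMonoidAlgebra.single_pow, one_pow]
      rw [hv, ← hp, hi]
      exact pow_mem hgen2 _
  have hsingle : ∀ e : Fin n → ℤ, (∀ i : Fin n, (i : ℕ) < n - 1 → 0 ≤ e i) → ∀ c : F,
      (AddMonoidAlgebra.single e c : AddMonoidAlgebra F (Fin n → ℤ)) ∈ Algebra.adjoin F S := by
    intro e he c
    have h1 : AddMonoidAlgebra.single e (1 : F) ∈ Algebra.adjoin F S := by
      have hedecomp : e = ∑ i : Fin n, (e i) • (Pi.single i 1 : Fin n → ℤ) := by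
        funext j
        simp [Pi.single_apply, Finset.sum_apply]
      have hprod : ∏ i : Fin n,
            AddMonoidAlgebra.single ((e i) • (Pi.single i 1 : Fin n → ℤ)) (1 : F)
          = AddMonoidAlgebra.single
              (∑ i : Fin n, (e i) • (Pi.single i 1 : Fin n → ℤ)) (1 : F) := by
        rw [AddMonoidAlgebra.prod_single, Finset.prod_const_one]
      rw [hedecomp, ← hprod]
      exact prod_mem fun i _ => hmono i (e i) (he i)
    have h2 : (AddMonoidAlgebra.single e c : AddMonoidAlgebra F (Fin n → ℤ))
        = AddMonoidAlgebra.single e (1 : F)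
          * algebraMap F (AddMonoidAlgebra F (Fin n → ℤ)) c := by
      rw [AddMonoidAlgebra.coe_algebraMap]
      simp [AddMonoidAlgebra.single_mul_single]
    rw [h2]
    exact mul_mem h1 (Subalgebra.algebraMap_mem (Algebra.adjoin F S) c)
  rw [← AddMonoidAlgebra.sum_coeff_single lam, Finsupp.sum]
  refine sum_mem fun e hesupp => ?_
  refine hsingle e (fun i hi => ?_) (lam.coeff e)
  by_contra hneg
  exact (Finsupp.mem_support_iff.mp hesupp)
    (hvanish i hi e (lt_of_not_ge hneg))
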